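/- An allocation σ is Pareto optimal if and only if there exists an ordering i_1, i_2, …, i_n of the agents such that for each j, agent i_j is assigned under σ their most-preferred room among the rooms not assigned to agents i_1, …, i_{j−1}. (The Pareto-optimal allocations are exactly the serial-dictatorship outcomes over all orders of the agents.) -/

import Mathlib

/-- Allocation `σ'` Pareto dominates allocation `σ`: every agent weakly prefers
`σ' i` to `σ i` (equal or strictly preferred), and some agent strictly prefers it. -/
def ParetoDominates {A R : Type*} (pref : A → R → R → Prop) (σ' σ : A ≃ R) : Prop :=
  (∀ i, σ' i = σ i ∨ pref i (σ' i) (σ i)) ∧ ∃ i, pref i (σ' i) (σ i)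

/-- An allocation is Pareto optimal if no allocation Pareto dominates it. -/
def ParetoOptimal {A R : Type*} (pref : A → R → R → Prop) (σ : A ≃ R) : Prop :=
  ∀ σ' : A ≃ R, ¬ ParetoDominates pref σ' σ

/-- Key lemma: in a Pareto optimal allocation, every nonempty set of agents contains an
agent whose assigned room is their favorite among the rooms held by that set. -/
theorem exists_top_agent {n : ℕ} (pref : Fin n → Fin n → Fin n → Prop)
    (hpref : ∀ i, IsStrictTotalOrder (Fin n) (pref i))
    (σ : Fin n ≃ Fin n) (hPO : ParetoOptimal pref σ)
    (S : Finset (Fin n)) (hS : S.Nonempty) :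
    ∃ i ∈ S, ∀ i' ∈ S, σ i' ≠ σ i → pref i (σ i) (σ i') := by
  by_contra hc
  push_neg at hc
  -- build an "envy" function f
  have hc' : ∀ i ∈ S, ∃ i' ∈ S, pref i (σ i') (σ i) := by
    intro i hi
    obtain ⟨i', hi', hne, hnp⟩ := hc i hi
    refine ⟨i', hi', ?_⟩
    by_contra h
    exact hne ((hpref i).trichotomous (σ i) (σ i') hnp h).symm
  classical
  set f : Fin n → Fin n := fun i => if h : i ∈ S then (hc' i h).choose else i with hf
  have hfS : ∀ i ∈ S, f i ∈ S := by
    intro i hi; simp only [hf, dif_pos hi]; exact (hc' i hi).choose_spec.1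
  have hfp : ∀ i ∈ S, pref i (σ (f i)) (σ i) := by
    intro i hi; simp only [hf, dif_pos hi]; exact (hc' i hi).choose_spec.2
  obtain ⟨a, ha⟩ := hS
  have hiter : ∀ k, f^[k] a ∈ S := by
    intro k; induction k with
    | zero => simpa using ha
    | succ k ih => rw [Function.iterate_succ_apply']; exact hfS _ ih
  -- pigeonhole: find a periodic point b
  obtain ⟨k, l, hkl, heq⟩ := Finite.exists_ne_map_eq_of_infinite (fun k : ℕ => f^[k] a)
  wlog hlt : k < l generalizing k l
  · exact this l k hkl.symm heq.symm (by omega)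
  have hper : ∃ p, 0 < p ∧ f^[p] (f^[k] a) = f^[k] a := by
    refine ⟨l - k, by omega, ?_⟩
    rw [← Function.iterate_add_apply]
    have : l - k + k = l := by omega
    rw [this]; exact heq.symm
  set b := f^[k] a with hb
  set m := Nat.find hper with hm
  obtain ⟨hm0, hmb⟩ : 0 < m ∧ f^[m] b = b := Nat.find_spec hper
  have hbS : ∀ s, f^[s] b ∈ S := by
    intro s; rw [hb, ← Function.iterate_add_apply]; exact hiter _
  have hdist : ∀ s t, s < t → t < m → f^[s] b ≠ f^[t] b := by
    intro s t hst htm hst'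
    have : f^[m - t + s] b = b := by
      rw [Function.iterate_add_apply, hst', ← Function.iterate_add_apply]
      have : m - t + t = m := by omega
      rw [this]; exact hmb
    exact Nat.find_min hper (m := m - t + s) (by omega) ⟨by omega, this⟩
  set L : List (Fin n) := (List.range m).map (fun s => f^[s] b) with hL
  have hlen : L.length = m := by simp [hL]
  have hnod : L.Nodup := by
    refine List.Nodup.map_on ?_ List.nodup_range
    intro s hs t ht hst
    simp only [List.mem_range] at hs ht
    rcases lt_trichotomy s t with h | h | h
    · exact absurd hst (hdist s t h ht)
    · exact h
    · exact absurd hst.symm (hdist t s h hs)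
  have hmemL : ∀ x ∈ L, x ∈ S := by
    intro x hx
    obtain ⟨s, _, rfl⟩ := List.mem_map.mp hx
    exact hbS s
  have hgetL : ∀ (i : ℕ) (h : i < L.length), L[i]'h = f^[i] b := by
    intro i h; simp [hL]
  set π := L.formPerm with hπdef
  have hπ : ∀ x ∈ L, π x = f x := by
    intro x hx
    obtain ⟨i, hi, hxi⟩ := List.getElem_of_mem hx
    subst hxi
    rw [hπdef, List.formPerm_apply_getElem L hnod i hi]
    rw [hgetL i hi, hgetL _ (Nat.mod_lt _ (by omega))]
    rcases Nat.lt_or_ge (i + 1) L.length with h | h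
    · rw [Nat.mod_eq_of_lt h, Function.iterate_succ_apply']
    · have him : i + 1 = L.length := by omega
      rw [him, Nat.mod_self]
      simp only [Function.iterate_zero_apply]
      rw [← Function.iterate_succ_apply' f i b]
      have : i.succ = m := by omega
      rw [this]
      exact hmb.symm
  have hbL : b ∈ L := by
    rw [hL]
    exact List.mem_map.mpr ⟨0, List.mem_range.mpr hm0, by simp⟩
  refine hPO (π.trans σ) ⟨?_, ⟨b, ?_⟩⟩
  · intro i
    by_cases hi : i ∈ L
    · right
      simp only [Equiv.trans_apply]
      rw [hπ i hi]
      exact hfp i (hmemL i hi)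
    · left
      simp only [Equiv.trans_apply]
      rw [List.formPerm_apply_of_notMem hi]
  · simp only [Equiv.trans_apply]
    rw [hπ b hbL]
    exact hfp b (hmemL b hbL)

open Classical in
/-- Serial dictatorship greedy choice: `sdg pref σ j` is the agent chosen at step `j`. -/
noncomputable def sdg {n : ℕ} (pref : Fin n → Fin n → Fin n → Prop) (σ : Fin n ≃ Fin n) :
    Fin n → Fin n
  | j =>
    if h : ∃ i ∈ Finset.univ \ (Finset.Iio j).attach.image (fun k => sdg pref σ k.1),
        ∀ i' ∈ Finset.univ \ (Finset.Iio j).attach.image (fun k => sdg pref σ k.1),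
          σ i' ≠ σ i → pref i (σ i) (σ i') then
      h.choose
    else ⟨0, j.pos⟩
termination_by j => j.val
decreasing_by all_goals { have h2 := Finset.mem_Iio.mp k.2; exact h2 }

/-- Remaining agents at step `j`. -/
noncomputable def sdS {n : ℕ} (pref : Fin n → Fin n → Fin n → Prop) (σ : Fin n ≃ Fin n)
    (j : Fin n) : Finset (Fin n) :=
  Finset.univ \ (Finset.Iio j).attach.image (fun k => sdg pref σ k.1)

theorem sdS_nonempty {n : ℕ} (pref : Fin n → Fin n → Fin n → Prop) (σ : Fin n ≃ Fin n)
    (j : Fin n) : (sdS pref σ j).Nonempty := by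
  rw [← Finset.card_pos, sdS, Finset.card_sdiff_of_subset (Finset.subset_univ _)]
  have h1 : ((Finset.Iio j).attach.image (fun k => sdg pref σ k.1)).card ≤ j.val := by
    calc _ ≤ (Finset.Iio j).attach.card := Finset.card_image_le
    _ = (Finset.Iio j).card := Finset.card_attach
    _ = j.val := Fin.card_Iio j
  have h2 : (Finset.univ : Finset (Fin n)).card = n := by simp
  have := j.isLt
  omega

theorem sdg_spec {n : ℕ} (pref : Fin n → Fin n → Fin n → Prop)
    (hpref : ∀ i, IsStrictTotalOrder (Fin n) (pref i))
    (σ : Fin n ≃ Fin n) (hPO : ParetoOptimal pref σ)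
    (j : Fin n) :
    sdg pref σ j ∈ sdS pref σ j ∧
      ∀ i' ∈ sdS pref σ j, σ i' ≠ σ (sdg pref σ j) →
        pref (sdg pref σ j) (σ (sdg pref σ j)) (σ i') := by
  have h := exists_top_agent pref hpref σ hPO (sdS pref σ j) (sdS_nonempty pref σ j)
  rw [sdS] at h
  rw [sdg, dif_pos h]
  exact ⟨h.choose_spec.1, h.choose_spec.2⟩

/-- An allocation is Pareto optimal iff it is a serial-dictatorship outcome for
some ordering of the agents: each agent in turn receives their most-preferred
room among the rooms not assigned to earlier agents. -/
theorem stmt_13 (n : ℕ) (pref : Fin n → Fin n → Fin n → Prop)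
    (hpref : ∀ i, IsStrictTotalOrder (Fin n) (pref i))
    (σ : Fin n ≃ Fin n) :
    ParetoOptimal pref σ ↔
      ∃ ord : Equiv.Perm (Fin n),
        ∀ j : Fin n, ∀ r : Fin n, (∀ k, k < j → σ (ord k) ≠ r) → r ≠ σ (ord j) →
          pref (ord j) (σ (ord j)) r := by
  constructor
  · intro hPO
    have key : ∀ a b : Fin n, a < b → sdg pref σ a ≠ sdg pref σ b := by
      intro a b hab heq
      have h1 := (sdg_spec pref hpref σ hPO b).1
      rw [sdS, Finset.mem_sdiff] at h1
      exact h1.2 (Finset.mem_image.mpr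
        ⟨⟨a, Finset.mem_Iio.mpr hab⟩, Finset.mem_attach _ _, heq⟩)
    have inj : Function.Injective (sdg pref σ) := by
      intro a b heq
      by_contra hne
      rcases lt_or_gt_of_ne hne with h | h
      · exact key a b h heq
      · exact key b a h heq.symm
    refine ⟨Equiv.ofBijective (sdg pref σ) (Finite.injective_iff_bijective.mp inj), ?_⟩
    intro j r h1 h2
    simp only [Equiv.ofBijective_apply] at h1 h2 ⊢
    have hmem : σ.symm r ∈ sdS pref σ j := by
      rw [sdS, Finset.mem_sdiff]
      refine ⟨Finset.mem_univ _, ?_⟩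
      intro hm
      obtain ⟨k, -, hk⟩ := Finset.mem_image.mp hm
      refine h1 k.1 (Finset.mem_Iio.mp k.2) ?_
      rw [hk, Equiv.apply_symm_apply]
    have hp := (sdg_spec pref hpref σ hPO j).2 (σ.symm r) hmem
      (by rw [Equiv.apply_symm_apply]; exact h2)
    rwa [Equiv.apply_symm_apply] at hp
  · rintro ⟨ord, hord⟩ σ' ⟨hweak, i0, hstrict⟩
    classical
    set T : Finset (Fin n) := Finset.univ.filter (fun j => σ' (ord j) ≠ σ (ord j)) with hT
    have hTne : T.Nonempty := by
      refine ⟨ord.symm i0, ?_⟩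
      rw [hT, Finset.mem_filter]
      refine ⟨Finset.mem_univ _, ?_⟩
      rw [Equiv.apply_symm_apply]
      intro he
      haveI := hpref i0
      exact irrefl_of (pref i0) (σ i0) (he ▸ hstrict)
    set j := T.min' hTne with hj
    have hjT : j ∈ T := T.min'_mem hTne
    rw [hT, Finset.mem_filter] at hjT
    have hmin : ∀ k, k < j → σ' (ord k) = σ (ord k) := by
      intro k hk
      by_contra hne
      have hkT : k ∈ T := by rw [hT, Finset.mem_filter]; exact ⟨Finset.mem_univ _, hne⟩
      exact absurd (T.min'_le k hkT) (not_le.mpr hk)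
    have hp : pref (ord j) (σ (ord j)) (σ' (ord j)) := by
      refine hord j (σ' (ord j)) ?_ hjT.2
      intro k hk he
      rw [← hmin k hk] at he
      exact absurd (ord.injective (σ'.injective he)) (ne_of_lt hk)
    haveI := hpref (ord j)
    rcases hweak (ord j) with he | hp'
    · exact hjT.2 he
    · exact irrefl_of (pref (ord j)) _ (trans_of (pref (ord j)) hp hp')
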